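/- Let p > 3 be a prime and let A be an 𝔽_p-brace whose multiplicative group (A,∘) is the group XV, with generators P, Q, R, S ∈ A satisfying the XV relations. If R ∈ A^2, then the brace A^2 is commutative: x∘y = y∘x (equivalently x*y = y*x) for all x, y ∈ A^2, and in fact A^2 = {P^i∘Q^j∘R^t : 0 < i, j, t ≤ p} (powers with respect to ∘). -/

import Mathlib

/-- A left brace: `(A, +)` an abelian group, `(A, *)` a group (we write the brace
multiplication `∘` as `*`), with `a * (b + c) + a = a * b + a * c`. -/
class LeftBrace (A : Type*) extends Group A, AddCommGroup A where
  mul_add_eq : ∀ a b c : A, a * (b + c) + a = a * b + a * c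

namespace LeftBrace

/-- The star operation `a * b = a∘b - a - b` of a left brace. -/
def star {A : Type*} [LeftBrace A] (a b : A) : A := a * b - a - b

end LeftBrace

/-- An `𝔽ₚ`-brace: a left brace whose additive group is a `ZMod p`-vector space
with `a * (α • b) = α • (a * b)`. -/
class FpBrace (p : ℕ) (A : Type*) extends LeftBrace A, Module (ZMod p) A where
  star_smul' : ∀ (α : ZMod p) (a b : A),
    LeftBrace.star a (α • b) = α • LeftBrace.star a b

/-- The left chain `A^1 = A`, `A^{i+1} = A * A^i` (additive subgroup generated by
`a * b`, `a ∈ A`, `b ∈ A^i`). -/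
def lpow (A : Type*) [LeftBrace A] : ℕ → AddSubgroup A
  | 0 => ⊤
  | 1 => ⊤
  | (n+2) => AddSubgroup.closure
      {x : A | ∃ a : A, ∃ b ∈ lpow A (n+1), x = LeftBrace.star a b}

/-- The right chain `A^{(1)} = A`, `A^{(i+1)} = A^{(i)} * A`. -/
def rpow (A : Type*) [LeftBrace A] : ℕ → AddSubgroup A
  | 0 => ⊤
  | 1 => ⊤
  | (n+2) => AddSubgroup.closure
      {x : A | ∃ a ∈ rpow A (n+1), ∃ b : A, x = LeftBrace.star a b}

/-- A left brace is right nilpotent if `A^{(n)} = 0` for some `n`. -/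
def IsRightNilpotent (A : Type*) [LeftBrace A] : Prop := ∃ n, rpow A n = ⊥

/-- The defining relations of the group XV on generators `P, Q, R, S`. -/
def XVRelations {A : Type*} [LeftBrace A] (p : ℕ) (P Q R S : A) : Prop :=
  Q * S = S * Q * P ∧ Q * R = R * Q ∧ P * S = S * P ∧ P * Q = Q * P ∧
  P * R = R * P ∧ R * S = S * R * Q ∧
  P ^ p = 1 ∧ Q ^ p = 1 ∧ R ^ p = 1 ∧ S ^ p = 1

/-- The multiplicative group of the brace `A` is the group XV, with generators
`P, Q, R, S` satisfying the XV relations. -/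
def IsXVBrace (p : ℕ) (A : Type*) [LeftBrace A] (P Q R S : A) : Prop :=
  Nat.card A = p ^ 4 ∧ Subgroup.closure {P, Q, R, S} = ⊤ ∧ XVRelations p P Q R S


/-- The Multiplicative Table with parameters `y, i, k`. -/
def MultTable {p : ℕ} {A : Type*} [LeftBrace A] [Module (ZMod p) A]
    (P Q R S : A) (y i k : ZMod p) : Prop :=
  LeftBrace.star P P = 0 ∧ LeftBrace.star P Q = 0 ∧
  LeftBrace.star P R = y • S ∧ LeftBrace.star P S = 0 ∧
  LeftBrace.star Q P = 0 ∧ LeftBrace.star Q Q = -(y • S) ∧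
  LeftBrace.star Q R = ((2 : ZMod p)⁻¹ * y) • S ∧ LeftBrace.star Q S = 0 ∧
  LeftBrace.star R P = y • S ∧ LeftBrace.star R Q = ((2 : ZMod p)⁻¹ * y) • S ∧
  LeftBrace.star R R = i • P + k • S ∧ LeftBrace.star R S = 0 ∧
  LeftBrace.star S P = 0 ∧ LeftBrace.star S Q = -P ∧
  LeftBrace.star S R = -Q + P - ((2 : ZMod p)⁻¹ * y) • S ∧ LeftBrace.star S S = 0

/-- Additive subgroup generated by all `x * y`, `x ∈ X`, `y ∈ Y`. -/
def starSpan {A : Type*} [LeftBrace A] (X Y : AddSubgroup A) : AddSubgroup A :=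
  AddSubgroup.closure {z : A | ∃ x ∈ X, ∃ y ∈ Y, z = LeftBrace.star x y}

/-- An ideal of a left brace: an additive subgroup closed under all `λ_a` and
normal in `(A, ∘)`. -/
def IsBraceIdeal {A : Type*} [LeftBrace A] (I : AddSubgroup A) : Prop :=
  (∀ a : A, ∀ b ∈ I, a * b - a ∈ I) ∧ (∀ a : A, ∀ b ∈ I, a * b * a⁻¹ ∈ I)

/-- A brace is prime if the product of any two nonzero ideals is nonzero. -/
def IsPrimeBrace (A : Type*) [LeftBrace A] : Prop :=
  ∀ I J : AddSubgroup A, IsBraceIdeal I → IsBraceIdeal J → I ≠ ⊥ → J ≠ ⊥ →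
    starSpan I J ≠ ⊥

/-- Left chain of a nonassociative algebra given by a bilinear map. -/
def preLieL (R : Type*) [CommRing R] (V : Type*) [AddCommGroup V] [Module R V]
    (mul : V →ₗ[R] V →ₗ[R] V) : ℕ → Submodule R V
  | 0 => ⊤
  | 1 => ⊤
  | (n+2) => Submodule.span R
      {x : V | ∃ a : V, ∃ b ∈ preLieL R V mul (n+1), x = mul a b}

/-- Right chain of a nonassociative algebra given by a bilinear map. -/
def preLieR (R : Type*) [CommRing R] (V : Type*) [AddCommGroup V] [Module R V]
    (mul : V →ₗ[R] V →ₗ[R] V) : ℕ → Submodule R V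
  | 0 => ⊤
  | 1 => ⊤
  | (n+2) => Submodule.span R
      {x : V | ∃ a ∈ preLieR R V mul (n+1), ∃ b : V, x = mul a b}

/-- The defining relations of the group XIV on generators `P, Q, R, S`. -/
def XIVRelations {A : Type*} [LeftBrace A] (p : ℕ) (P Q R S : A) : Prop :=
  Q * P = P * Q ∧ Q * R = R * Q ∧ Q * S = S * Q ∧
  P * R = R * P ∧ P * S = S * P ∧ R * S = S * R * P ∧
  P ^ p = 1 ∧ Q ^ p = 1 ∧ R ^ p = 1 ∧ S ^ p = 1

section Basic
open LeftBrace
variable {A : Type*} [LeftBrace A]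

lemma brace_mul_add (a b c : A) : a * (b + c) = a * b + a * c - a := by
  linear_combination (norm := abel_nf) (LeftBrace.mul_add_eq a b c)

lemma brace_mul_zero (a : A) : a * (0 : A) = a := by
  have h := LeftBrace.mul_add_eq a 0 0
  rw [add_zero] at h
  exact add_left_cancel h.symm

lemma brace_one_eq_zero : (1 : A) = 0 := by
  have := brace_mul_zero (1 : A)
  rw [one_mul] at this
  exact this.symm

lemma brace_mul_neg (a b : A) : a * (-b) = a + a - a * b := by
  have h := brace_mul_add a b (-b)
  rw [add_neg_cancel] at h
  rw [brace_mul_zero] at h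
  calc a * (-b) = (a * b + a * (-b) - a) + a - a * b := by abel
  _ = a + a - a * b := by rw [← h]

lemma star_eq (a b : A) : star a b = a * b - a - b := rfl

lemma mul_eq_star (a b : A) : a * b = star a b + a + b := by
  rw [star_eq]; abel

lemma brace_inv_eq (a : A) : a⁻¹ = -a - star a a⁻¹ := by
  have : star a a⁻¹ = a * a⁻¹ - a - a⁻¹ := rfl
  rw [mul_inv_cancel, brace_one_eq_zero] at this
  rw [this]; abel

end Basic

section Fp
open LeftBrace
variable {p : ℕ} {A : Type*} [FpBrace p A]

/-- The lambda map `λ_a(b) = a∘b - a` as a linear map. -/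
def lam (a : A) : A →ₗ[ZMod p] A where
  toFun b := a * b - a
  map_add' b c := by
    show a * (b + c) - a = (a * b - a) + (a * c - a)
    rw [brace_mul_add]; abel
  map_smul' α b := by
    have h1 : a * (α • b) - a - α • b = α • (a * b - a - b) :=
      FpBrace.star_smul' α a b
    have : a * (α • b) = α • (a*b) - α • a - α • b + a + α • b := by
      rw [smul_sub, smul_sub] at h1
      linear_combination (norm := abel_nf) h1
    show a * (α • b) - a = α • (a * b - a)
    rw [this, smul_sub]
    abel

lemma lam_apply (a b : A) : lam (p := p) a b = a * b - a := rfl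

lemma lam_one : lam (p := p) (1 : A) = LinearMap.id := by
  ext b; simp [lam_apply, brace_one_eq_zero]

lemma lam_mul (a b : A) : lam (p := p) (a * b) = (lam a).comp (lam b) := by
  ext c
  simp only [lam_apply, LinearMap.comp_apply]
  rw [mul_assoc]
  have : a * (b * c - b) = a * (b * c) + a * (-b) - a := by
    have := brace_mul_add a (b*c) (-b)
    rw [← sub_eq_add_neg] at this
    exact this
  rw [this, brace_mul_neg]
  abel

lemma star_mem_lpow2 (a b : A) : star a b ∈ lpow A 2 := by
  show star a b ∈ AddSubgroup.closure _
  exact AddSubgroup.subset_closure ⟨a, b, AddSubgroup.mem_top b, rfl⟩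

end Fp

section Dual
open LeftBrace
variable {p : ℕ} {A : Type*} [FpBrace p A]

def dualSmul (a : A) (f : Module.Dual (ZMod p) A) : Module.Dual (ZMod p) A :=
  f ∘ₗ lam a⁻¹

def dualMulAction : MulAction A (Module.Dual (ZMod p) A) where
  smul := dualSmul
  one_smul f := by
    show dualSmul 1 f = f
    unfold dualSmul
    rw [inv_one, lam_one, LinearMap.comp_id]
  mul_smul a b f := by
    show dualSmul (a * b) f = dualSmul a (dualSmul b f)
    unfold dualSmul
    rw [mul_inv_rev, lam_mul, LinearMap.comp_assoc]

lemma exists_dual_vanishing (hp : p.Prime) (hcard : Nat.card A = p ^ 4) :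
    ∃ f : Module.Dual (ZMod p) A, f ≠ 0 ∧ ∀ a b : A, f (star a b) = 0 := by
  haveI : Fact p.Prime := ⟨hp⟩
  haveI : Finite A := by
    have : 0 < Nat.card A := by
      rw [hcard]; exact pow_pos hp.pos 4
    exact (Nat.card_pos_iff.mp this).2
  haveI : Nontrivial A := by
    rw [← Finite.one_lt_card_iff_nontrivial, hcard]
    exact one_lt_pow₀ hp.one_lt (by norm_num)
  set D := Module.Dual (ZMod p) A with hD
  haveI : Finite D := Finite.of_injective _ (DFunLike.coe_injective (F := D))
  letI : MulAction A D := dualMulAction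
  -- D is nontrivial, hence p ∣ Nat.card D
  obtain ⟨a, ha⟩ := exists_ne (0 : A)
  have hφ : ∃ φ : D, φ a ≠ 0 := by
    by_contra h
    push_neg at h
    exact ha ((Module.forall_dual_apply_eq_zero_iff (ZMod p) a).mp h)
  obtain ⟨φ, hφ⟩ := hφ
  have hφ0 : φ ≠ 0 := fun h => hφ (by rw [h]; rfl)
  have hordφ : addOrderOf φ = p := by
    have h1 : p • φ = 0 := by
      rw [← Nat.cast_smul_eq_nsmul (ZMod p), ZMod.natCast_self, zero_smul]
    have h2 : addOrderOf φ ∣ p := addOrderOf_dvd_of_nsmul_eq_zero h1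
    rcases (Nat.Prime.eq_one_or_self_of_dvd hp _ h2) with h | h
    · exact absurd (AddMonoid.addOrderOf_eq_one_iff.mp h) hφ0
    · exact h
  have hpD : p ∣ Nat.card D := hordφ ▸ addOrderOf_dvd_natCard φ
  -- p-group fixed point argument
  have hPG : IsPGroup p A := IsPGroup.of_card hcard
  have hmod := hPG.card_modEq_card_fixedPoints D
  have h0fix : (0 : D) ∈ MulAction.fixedPoints A D := by
    intro g
    show dualSmul g 0 = 0
    unfold dualSmul
    ext x
    rfl
  have hfixcard : p ∣ Nat.card (MulAction.fixedPoints A D) :=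
    (Nat.modEq_zero_iff_dvd.mp ((hmod.symm.trans (Nat.modEq_zero_iff_dvd.mpr hpD))))
  haveI : Finite (MulAction.fixedPoints A D) := Subtype.finite
  have hpos : 0 < Nat.card (MulAction.fixedPoints A D) :=
    Nat.card_pos_iff.mpr ⟨⟨⟨0, h0fix⟩⟩, inferInstance⟩
  have h1lt : 1 < Nat.card (MulAction.fixedPoints A D) :=
    lt_of_lt_of_le hp.one_lt (Nat.le_of_dvd hpos hfixcard)
  haveI : Nontrivial (MulAction.fixedPoints A D) :=
    Finite.one_lt_card_iff_nontrivial.mp h1lt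
  obtain ⟨f, hfne⟩ := exists_ne (⟨0, h0fix⟩ : MulAction.fixedPoints A D)
  refine ⟨f.1, fun h => hfne (Subtype.ext h), fun x b => ?_⟩
  have hfix : ∀ g : A, dualSmul g f.1 = f.1 := f.2
  have := hfix x⁻¹
  unfold dualSmul at this
  rw [inv_inv] at this
  have happ : f.1 (lam (p := p) x b) = f.1 b := LinearMap.congr_fun this b
  rw [lam_apply] at happ
  rw [star_eq, sub_eq_add_neg (x*b - x) b, map_add, map_neg, happ]
  exact add_neg_cancel _

end Dual

section Helpers
open LeftBrace
variable {A : Type*} [LeftBrace A]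

lemma star_mem_lpow2' (a b : A) : star a b ∈ lpow A 2 :=
  AddSubgroup.subset_closure ⟨a, b, AddSubgroup.mem_top b, rfl⟩

/-- `lpow A 2` is closed under the brace multiplication, forming a subgroup of `(A,∘)`. -/
def lpow2Subgroup (A : Type*) [LeftBrace A] : Subgroup A where
  carrier := lpow A 2
  one_mem' := by
    show (1 : A) ∈ lpow A 2
    rw [brace_one_eq_zero]
    exact (lpow A 2).zero_mem
  mul_mem' := by
    intro a b ha hb
    show a * b ∈ lpow A 2
    rw [mul_eq_star]
    exact add_mem (add_mem (star_mem_lpow2' a b) ha) hb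
  inv_mem' := by
    intro a ha
    show a⁻¹ ∈ lpow A 2
    rw [brace_inv_eq a]
    exact sub_mem (neg_mem ha) (star_mem_lpow2' a a⁻¹)

lemma lpow2_mk_mul (a b : A) :
    ((a * b : A) : A ⧸ lpow A 2) = (a : A ⧸ lpow A 2) + b := by
  have : ((a * b : A) : A ⧸ lpow A 2) = ((star a b + a + b : A) : A ⧸ lpow A 2) := by
    rw [← mul_eq_star]
  rw [this]
  have h0 : ((star a b : A) : A ⧸ lpow A 2) = 0 :=
    (QuotientAddGroup.eq_zero_iff _).mpr (star_mem_lpow2' a b)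
  have h1 : ((star a b + a + b : A) : A ⧸ lpow A 2) =
      ((star a b : A) : A ⧸ lpow A 2) + a + b := rfl
  rw [h1, h0, zero_add]

end Helpers

section GroupHelpers
variable {G : Type*} [Group G]

lemma pow_normG {p : ℕ} (hp0 : 0 < p) (g : G) (hg : g ^ p = 1) (n : ℕ) :
    ∃ m, 0 < m ∧ m ≤ p ∧ g ^ n = g ^ m := by
  have key : g ^ n = g ^ (n % p) := by
    conv_lhs => rw [← Nat.mod_add_div n p]
    rw [pow_add, pow_mul, hg, one_pow, mul_one]
  by_cases h : n % p = 0
  · exact ⟨p, hp0, le_refl p, by rw [key, h, pow_zero, ← hg]⟩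
  · exact ⟨n % p, Nat.pos_of_ne_zero h, le_of_lt (Nat.mod_lt n hp0), key⟩

lemma triple_mulG {a b c : G} (hab : Commute a b) (hac : Commute a c)
    (hbc : Commute b c) (i j t i' j' t' : ℕ) :
    (a ^ i * b ^ j * c ^ t) * (a ^ i' * b ^ j' * c ^ t') =
      a ^ (i + i') * b ^ (j + j') * c ^ (t + t') := by
  have h1 : Commute (c ^ t) (a ^ i') := (hac.symm).pow_pow t i'
  have h2 : Commute (b ^ j) (a ^ i') := (hab.symm).pow_pow j i'
  have h3 : Commute (c ^ t) (b ^ j') := (hbc.symm).pow_pow t j'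
  simp only [pow_add, mul_assoc]
  rw [Commute.left_comm h1, Commute.left_comm h2, Commute.left_comm h3]

/-- The subgroup `{a^i b^j c^t : 0 < i,j,t ≤ p}` for pairwise commuting elements
of order dividing `p`. -/
def tripleSubgroup (p : ℕ) (hp0 : 0 < p) (a b c : G) (hab : Commute a b)
    (hac : Commute a c) (hbc : Commute b c)
    (ha : a ^ p = 1) (hb : b ^ p = 1) (hc : c ^ p = 1) : Subgroup G where
  carrier := {x : G | ∃ i j t : ℕ, 0 < i ∧ i ≤ p ∧ 0 < j ∧ j ≤ p ∧ 0 < t ∧ t ≤ p ∧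
    x = a ^ i * b ^ j * c ^ t}
  one_mem' := ⟨p, p, p, hp0, le_rfl, hp0, le_rfl, hp0, le_rfl, by
    rw [ha, hb, hc, one_mul, one_mul]⟩
  mul_mem' := by
    rintro x y ⟨i, j, t, -, -, -, -, -, -, rfl⟩ ⟨i', j', t', -, -, -, -, -, -, rfl⟩
    obtain ⟨mi, hmi1, hmi2, hmi3⟩ := pow_normG hp0 a ha (i + i')
    obtain ⟨mj, hmj1, hmj2, hmj3⟩ := pow_normG hp0 b hb (j + j')
    obtain ⟨mt, hmt1, hmt2, hmt3⟩ := pow_normG hp0 c hc (t + t')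
    exact ⟨mi, mj, mt, hmi1, hmi2, hmj1, hmj2, hmt1, hmt2, by
      rw [triple_mulG hab hac hbc, hmi3, hmj3, hmt3]⟩
  inv_mem' := by
    rintro x ⟨i, j, t, -, -, -, -, -, -, rfl⟩
    have hexp : ∀ n : ℕ, n + n * (p - 1) = p * n := fun n => by
      obtain ⟨k, rfl⟩ : ∃ k, p = k + 1 := ⟨p - 1, (Nat.succ_pred_eq_of_pos hp0).symm⟩
      simp [Nat.add_sub_cancel]
      ring
    have hmul : (a ^ i * b ^ j * c ^ t) *
        (a ^ (i * (p-1)) * b ^ (j * (p-1)) * c ^ (t * (p-1))) = 1 := by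
      rw [triple_mulG hab hac hbc, hexp, hexp, hexp, pow_mul, pow_mul, pow_mul,
        ha, hb, hc, one_pow, one_pow, one_pow, one_mul, one_mul]
    obtain ⟨mi, hmi1, hmi2, hmi3⟩ := pow_normG hp0 a ha (i * (p-1))
    obtain ⟨mj, hmj1, hmj2, hmj3⟩ := pow_normG hp0 b hb (j * (p-1))
    obtain ⟨mt, hmt1, hmt2, hmt3⟩ := pow_normG hp0 c hc (t * (p-1))
    exact ⟨mi, mj, mt, hmi1, hmi2, hmj1, hmj2, hmt1, hmt2, by
      rw [← hmi3, ← hmj3, ← hmt3, inv_eq_of_mul_eq_one_right hmul]⟩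

end GroupHelpers

open LeftBrace in
theorem statement7 (p : ℕ) (hp : p.Prime) (hp3 : 3 < p) (A : Type*) [FpBrace p A]
    (P Q R S : A) (hXV : IsXVBrace p A P Q R S) (hR : R ∈ lpow A 2) :
    (∀ x ∈ lpow A 2, ∀ y ∈ lpow A 2, x * y = y * x ∧ star x y = star y x) ∧
    (lpow A 2 : Set A) =
      {x : A | ∃ i j t : ℕ, 0 < i ∧ i ≤ p ∧ 0 < j ∧ j ≤ p ∧ 0 < t ∧ t ≤ p ∧
        x = P ^ i * Q ^ j * R ^ t} := by
  obtain ⟨hcard, hgen, r1, r2, r3, r4, r5, r6, hPp, hQp, hRp, hSp⟩ := hXV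
  haveI : Fact p.Prime := ⟨hp⟩
  have hp0 : 0 < p := hp.pos
  haveI hfin : Finite A := by
    have : 0 < Nat.card A := by rw [hcard]; exact pow_pos hp0 4
    exact (Nat.card_pos_iff.mp this).2
  -- P and Q lie in A²  (they are commutators)
  have hPmem : P ∈ lpow A 2 := by
    have h := congrArg (fun x : A => (x : A ⧸ lpow A 2)) r1
    simp only [lpow2_mk_mul] at h
    rw [add_comm (S : A ⧸ lpow A 2) (Q : A ⧸ lpow A 2)] at h
    exact (QuotientAddGroup.eq_zero_iff P).mp (left_eq_add.mp h)
  have hQmem : Q ∈ lpow A 2 := by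
    have h := congrArg (fun x : A => (x : A ⧸ lpow A 2)) r6
    simp only [lpow2_mk_mul] at h
    rw [add_comm (S : A ⧸ lpow A 2) (R : A ⧸ lpow A 2)] at h
    exact (QuotientAddGroup.eq_zero_iff Q).mp (left_eq_add.mp h)
  -- commuting generators
  have hPQ : Commute P Q := r4
  have hPR : Commute P R := r5
  have hQR : Commute Q R := r2
  set H : Subgroup A := Subgroup.closure ({P, Q, R} : Set A) with hHdef
  have hPH : P ∈ H := Subgroup.subset_closure (by simp)
  have hQH : Q ∈ H := Subgroup.subset_closure (by simp)
  have hRH : R ∈ H := Subgroup.subset_closure (by simp)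
  -- H ⊆ A²
  have hHleI : H ≤ lpow2Subgroup A := by
    rw [hHdef, Subgroup.closure_le]
    intro x hx
    rcases hx with rfl | rfl | rfl
    · exact hPmem
    · exact hQmem
    · exact hR
  -- conjugation identities
  have hconjP : S * P * S⁻¹ = P := by
    rw [← r3, mul_assoc, mul_inv_cancel, mul_one]
  have hc3 : Commute P S := r3
  have hPinvS : S * P⁻¹ = P⁻¹ * S := (hc3.inv_left.eq).symm
  have hconjQ : S * Q * S⁻¹ = Q * P⁻¹ := by
    have h1 : S * Q = Q * S * P⁻¹ := by
      rw [eq_comm, mul_inv_eq_iff_eq_mul, ← r1]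
    calc S * Q * S⁻¹ = Q * S * P⁻¹ * S⁻¹ := by rw [h1]
    _ = Q * (S * P⁻¹ * S⁻¹) := by simp only [mul_assoc]
    _ = Q * (P⁻¹ * (S * S⁻¹)) := by rw [hPinvS, mul_assoc]
    _ = Q * P⁻¹ := by rw [mul_inv_cancel, mul_one]
  have hconjR : S * R * S⁻¹ = R * (P * Q⁻¹) := by
    have h1 : S * R = R * S * Q⁻¹ := by
      rw [eq_comm, mul_inv_eq_iff_eq_mul, ← r6]
    have h2 : S * Q⁻¹ * S⁻¹ = P * Q⁻¹ := by
      have := congrArg (fun z => z⁻¹) hconjQ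
      simp only [mul_inv_rev, inv_inv] at this
      calc S * Q⁻¹ * S⁻¹ = (S * Q * S⁻¹)⁻¹ := by simp [mul_inv_rev, mul_assoc]
      _ = (Q * P⁻¹)⁻¹ := by rw [hconjQ]
      _ = P * Q⁻¹ := by simp [mul_inv_rev]
    calc S * R * S⁻¹ = R * S * Q⁻¹ * S⁻¹ := by rw [h1]
    _ = R * (S * Q⁻¹ * S⁻¹) := by simp only [mul_assoc]
    _ = R * (P * Q⁻¹) := by rw [h2]
  have hconjP' : S⁻¹ * P * S = P := by
    rw [mul_assoc, r3, ← mul_assoc, inv_mul_cancel, one_mul]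
  have hconjQ' : S⁻¹ * Q * S = Q * P := by
    rw [mul_assoc, r1, ← mul_assoc, ← mul_assoc, inv_mul_cancel, one_mul]
  have hconjR' : S⁻¹ * R * S = R * Q := by
    rw [mul_assoc, r6, ← mul_assoc, ← mul_assoc, inv_mul_cancel, one_mul]
  -- S normalizes H
  have hmap1 : ∀ x ∈ H, S * x * S⁻¹ ∈ H := by
    have hle : Subgroup.map (MulAut.conj S).toMonoidHom H ≤ H := by
      rw [hHdef, MonoidHom.map_closure, Subgroup.closure_le]
      rintro y ⟨z, hz, rfl⟩
      have hz' : z = P ∨ z = Q ∨ z = R := hz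
      show S * z * S⁻¹ ∈ H
      rcases hz' with h | h | h <;> rw [h]
      · rw [hconjP]; exact hPH
      · rw [hconjQ]; exact mul_mem hQH (inv_mem hPH)
      · rw [hconjR]; exact mul_mem hRH (mul_mem hPH (inv_mem hQH))
    exact fun x hx => hle ⟨x, hx, rfl⟩
  have hmap2 : ∀ x ∈ H, S⁻¹ * x * S ∈ H := by
    have hle : Subgroup.map (MulAut.conj S⁻¹).toMonoidHom H ≤ H := by
      rw [hHdef, MonoidHom.map_closure, Subgroup.closure_le]
      rintro y ⟨z, hz, rfl⟩
      have hz' : z = P ∨ z = Q ∨ z = R := hz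
      show S⁻¹ * z * S⁻¹⁻¹ ∈ H
      rw [inv_inv]
      rcases hz' with h | h | h <;> rw [h]
      · rw [hconjP']; exact hPH
      · rw [hconjQ']; exact mul_mem hQH hPH
      · rw [hconjR']; exact mul_mem hRH hQH
    intro x hx
    have h0 := hle ⟨x, hx, rfl⟩
    have h1 : (MulAut.conj S⁻¹).toMonoidHom x = S⁻¹ * x * S := by
      show S⁻¹ * x * S⁻¹⁻¹ = S⁻¹ * x * S
      rw [inv_inv]
    rwa [h1] at h0
  have hSnorm : S ∈ Subgroup.normalizer (H : Set A) := by
    rw [Subgroup.mem_normalizer_iff]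
    intro h
    constructor
    · exact fun hh => hmap1 h hh
    · intro hh
      have h2 := hmap2 _ hh
      have h3 : S⁻¹ * (S * h * S⁻¹) * S = h := by group
      rwa [h3] at h2
  have hHnormal : H.Normal := by
    rw [← Subgroup.normalizer_eq_top_iff, eq_top_iff, ← hgen, Subgroup.closure_le]
    rintro x (rfl | rfl | rfl | rfl)
    · exact Subgroup.le_normalizer hPH
    · exact Subgroup.le_normalizer hQH
    · exact Subgroup.le_normalizer hRH
    · exact hSnorm
  haveI := hHnormal
  -- the quotient A ⧸ H is generated by the image of S, so its order divides p
  have htop : Subgroup.closure ({((S : A) : A ⧸ H)} : Set (A ⧸ H)) = ⊤ := by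
    rw [eq_top_iff,
      ← Subgroup.map_top_of_surjective (QuotientGroup.mk' H) (QuotientGroup.mk'_surjective H),
      ← hgen, MonoidHom.map_closure, Subgroup.closure_le]
    rintro y ⟨z, hz, rfl⟩
    have hz' : z = P ∨ z = Q ∨ z = R ∨ z = S := hz
    rcases hz' with h | h | h | h <;> rw [h]
    · have h1 : (QuotientGroup.mk' H) P = 1 := (QuotientGroup.eq_one_iff P).mpr hPH
      rw [h1]; exact one_mem _
    · have h1 : (QuotientGroup.mk' H) Q = 1 := (QuotientGroup.eq_one_iff Q).mpr hQH
      rw [h1]; exact one_mem _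
    · have h1 : (QuotientGroup.mk' H) R = 1 := (QuotientGroup.eq_one_iff R).mpr hRH
      rw [h1]; exact one_mem _
    · exact Subgroup.subset_closure rfl
  have hq : Nat.card (A ⧸ H) ∣ p := by
    have h1 : orderOf ((S : A) : A ⧸ H) ∣ p := orderOf_dvd_of_pow_eq_one (by
      rw [← QuotientGroup.mk_pow, hSp]; rfl)
    have h2 : Nat.card (A ⧸ H) = orderOf ((S : A) : A ⧸ H) := by
      rw [← Nat.card_zpowers, Subgroup.zpowers_eq_closure, htop, Subgroup.card_top]
    rw [h2]; exact h1
  have hcardH3 : p ^ 3 ≤ Nat.card H := by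
    have heq := Subgroup.card_eq_card_quotient_mul_card_subgroup H
    rw [hcard] at heq
    have hqle : Nat.card (A ⧸ H) ≤ p := Nat.le_of_dvd hp0 hq
    have h1 : p * p ^ 3 ≤ p * Nat.card H := by
      calc p * p ^ 3 = p ^ 4 := by ring
      _ = Nat.card (A ⧸ H) * Nat.card H := heq
      _ ≤ p * Nat.card H := Nat.mul_le_mul_right _ hqle
    exact Nat.le_of_mul_le_mul_left h1 hp0
  -- A² is a proper subgroup, of order at most p³
  obtain ⟨f, hf0, hfstar⟩ := exists_dual_vanishing hp hcard
  have hIker : lpow A 2 ≤ (LinearMap.ker f).toAddSubgroup := by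
    have hrfl : lpow A 2 =
        AddSubgroup.closure {x : A | ∃ a : A, ∃ b ∈ lpow A 1, x = star a b} := rfl
    rw [hrfl, AddSubgroup.closure_le]
    rintro x ⟨a, b, -, rfl⟩
    simp only [SetLike.mem_coe, Submodule.mem_toAddSubgroup, LinearMap.mem_ker]
    exact hfstar a b
  have hInotTop : lpow A 2 ≠ ⊤ := by
    intro h
    obtain ⟨x, hx⟩ := DFunLike.ne_iff.mp hf0
    have hxm : x ∈ lpow A 2 := h ▸ AddSubgroup.mem_top x
    have := hIker hxm
    simp only [Submodule.mem_toAddSubgroup, LinearMap.mem_ker] at this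
    exact hx (by simpa using this)
  have hcardIle : Nat.card (lpow A 2) ≤ p ^ 3 := by
    have hdvd : Nat.card (lpow A 2) ∣ p ^ 4 :=
      hcard ▸ AddSubgroup.card_addSubgroup_dvd_card (lpow A 2)
    obtain ⟨k, hk4, hkeq⟩ := (Nat.dvd_prime_pow hp).mp hdvd
    have hk3 : k ≤ 3 := by
      by_contra hcon
      have hk : k = 4 := by omega
      rw [hk, ← hcard] at hkeq
      exact hInotTop (AddSubgroup.eq_top_of_card_eq _ hkeq)
    rw [hkeq]
    exact Nat.pow_le_pow_right hp.one_lt.le hk3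
  -- conclude: (H : Set A) = A²
  have hsub : (H : Set A) ⊆ ((lpow A 2 : AddSubgroup A) : Set A) := fun x hx => hHleI hx
  have hncard : ((lpow A 2 : AddSubgroup A) : Set A).ncard ≤ (H : Set A).ncard := by
    rw [← Nat.card_coe_set_eq, ← Nat.card_coe_set_eq]
    calc Nat.card ((lpow A 2 : AddSubgroup A) : Set A) = Nat.card (lpow A 2) := rfl
    _ ≤ p ^ 3 := hcardIle
    _ ≤ Nat.card H := hcardH3
    _ = Nat.card ((H : Set A) : Set A) := rfl
  have hseteq : (H : Set A) = ((lpow A 2 : AddSubgroup A) : Set A) :=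
    Set.eq_of_subset_of_ncard_le hsub hncard (Set.toFinite _)
  -- H equals the set of triple products
  set T : Subgroup A := tripleSubgroup p hp0 P Q R hPQ hPR hQR hPp hQp hRp with hTdef
  have hHT : H = T := by
    apply le_antisymm
    · rw [hHdef, Subgroup.closure_le]
      rintro x (rfl | rfl | rfl)
      · exact ⟨1, p, p, one_pos, hp0, hp0, le_rfl, hp0, le_rfl, by
          rw [pow_one, hQp, hRp, mul_one, mul_one]⟩
      · exact ⟨p, 1, p, hp0, le_rfl, one_pos, hp0, hp0, le_rfl, by
          rw [pow_one, hPp, hRp, one_mul, mul_one]⟩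
      · exact ⟨p, p, 1, hp0, le_rfl, hp0, le_rfl, one_pos, hp0, by
          rw [pow_one, hPp, hQp, one_mul, one_mul]⟩
    · intro x hx
      obtain ⟨i, j, t, -, -, -, -, -, -, rfl⟩ := hx
      exact mul_mem (mul_mem (pow_mem hPH i) (pow_mem hQH j)) (pow_mem hRH t)
  have hmemH : ∀ x, x ∈ lpow A 2 → x ∈ H := by
    intro x hx
    have : x ∈ ((lpow A 2 : AddSubgroup A) : Set A) := hx
    rw [← hseteq] at this
    exact this
  constructor
  · intro x hx y hy
    have hxT : x ∈ T := hHT ▸ hmemH x hx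
    have hyT : y ∈ T := hHT ▸ hmemH y hy
    obtain ⟨i, j, t, -, -, -, -, -, -, rfl⟩ := hxT
    obtain ⟨i', j', t', -, -, -, -, -, -, rfl⟩ := hyT
    have hxy : (P ^ i * Q ^ j * R ^ t) * (P ^ i' * Q ^ j' * R ^ t') =
        (P ^ i' * Q ^ j' * R ^ t') * (P ^ i * Q ^ j * R ^ t) := by
      rw [triple_mulG hPQ hPR hQR, triple_mulG hPQ hPR hQR,
        Nat.add_comm i' i, Nat.add_comm j' j, Nat.add_comm t' t]
    refine ⟨hxy, ?_⟩
    rw [star_eq, star_eq, hxy, sub_right_comm]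
  · calc ((lpow A 2 : AddSubgroup A) : Set A) = (H : Set A) := hseteq.symm
    _ = (T : Set A) := by rw [hHT]
    _ = {x : A | ∃ i j t : ℕ, 0 < i ∧ i ≤ p ∧ 0 < j ∧ j ≤ p ∧ 0 < t ∧ t ≤ p ∧
        x = P ^ i * Q ^ j * R ^ t} := rfl
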